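/- arXiv:1010.3843 — 2 statements merged into one kernel-verified Lean document; each statement's English description precedes it below -/
import Mathlib

section
/- Let A and B be d×d positive semidefinite real matrices, and let √A, √B denote their positive semidefinite square roots. Then the Frobenius norm satisfies ‖√A − √B‖ ≤ d^{3/4} · √(‖A − B‖). -/
open Matrix Finset

/-- The Frobenius norm of a real square matrix. -/
noncomputable def frobNorm {d : ℕ} (M : Matrix (Fin d) (Fin d) ℝ) : ℝ :=
  Real.sqrt (∑ i, ∑ j, (M i j) ^ 2)

section aux

variable {d : ℕ}

lemma aux_frobNorm_nonneg (M : Matrix (Fin d) (Fin d) ℝ) : 0 ≤ frobNorm M :=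
  Real.sqrt_nonneg _

/-- Cauchy–Schwarz bound: |vᵀ M v| ≤ ‖M‖_F for a unit vector v. -/
lemma aux_quad_le (M : Matrix (Fin d) (Fin d) ℝ) (v : Fin d → ℝ)
    (hv : ∑ j, v j ^ 2 = 1) : |v ⬝ᵥ (M *ᵥ v)| ≤ frobNorm M := by
  have hq : v ⬝ᵥ (M *ᵥ v) = ∑ p : Fin d × Fin d, (M p.1 p.2) * (v p.1 * v p.2) := by
    rw [Fintype.sum_prod_type]
    simp only [dotProduct, Matrix.mulVec, Finset.mul_sum]
    congr 1; ext i; congr 1; ext j; ring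
  have hcs := Finset.sum_mul_sq_le_sq_mul_sq Finset.univ
    (fun p : Fin d × Fin d => M p.1 p.2) (fun p => v p.1 * v p.2)
  have hvv : ∑ p : Fin d × Fin d, (v p.1 * v p.2) ^ 2 = 1 := by
    rw [Fintype.sum_prod_type]
    simp only [mul_pow, ← Finset.mul_sum, ← Finset.sum_mul, hv]
    simp [hv]
  rw [hvv, mul_one] at hcs
  rw [hq]
  have h1 : |∑ p : Fin d × Fin d, (M p.1 p.2) * (v p.1 * v p.2)|
      ≤ Real.sqrt (∑ p : Fin d × Fin d, (M p.1 p.2) ^ 2) := by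
    rw [← Real.sqrt_sq_eq_abs]
    exact Real.sqrt_le_sqrt hcs
  refine h1.trans_eq ?_
  unfold frobNorm
  congr 1
  rw [Fintype.sum_prod_type]

end aux

/-- If `A` and `B` are `d × d` positive semidefinite real matrices with positive
semidefinite square roots `S` and `T` respectively, then
`‖S − T‖_F ≤ d^{3/4} · √(‖A − B‖_F)`. -/
theorem frobNorm_sqrt_sub_sqrt_le (d : ℕ) (A B S T : Matrix (Fin d) (Fin d) ℝ)
    (hA : A.PosSemidef) (hB : B.PosSemidef)
    (hS : S.PosSemidef) (hT : T.PosSemidef)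
    (hSA : S * S = A) (hTB : T * T = B) :
    frobNorm (S - T) ≤ (d : ℝ) ^ ((3 : ℝ) / 4) * Real.sqrt (frobNorm (A - B)) := by
  rcases Nat.eq_zero_or_pos d with hd | hd
  · subst hd
    have : frobNorm (S - T) = 0 := by simp [frobNorm]
    rw [this]
    positivity
  set C := S - T with hCdef
  have hC : C.IsHermitian := hS.1.sub hT.1
  set F := frobNorm (A - B) with hF
  have hF0 : 0 ≤ F := aux_frobNorm_nonneg _
  -- decomposition A - B = S*C + C*T
  have hdecomp : A - B = S * C + C * T := by
    rw [← hSA, ← hTB, hCdef]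
    noncomm_ring
  -- per-eigenvalue bound
  have key : ∀ i, (hC.eigenvalues i) ^ 2 ≤ F := by
    intro i
    set v : Fin d → ℝ := ⇑(hC.eigenvectorBasis i) with hvdef
    set lam := hC.eigenvalues i with hlam
    have hev : C *ᵥ v = lam • v := hC.mulVec_eigenvectorBasis i
    have hnorm : ∑ j, v j ^ 2 = 1 := by
      have h1 : ‖hC.eigenvectorBasis i‖ = 1 := hC.eigenvectorBasis.orthonormal.1 i
      have h2 := EuclideanSpace.norm_eq (hC.eigenvectorBasis i)
      rw [h1] at h2
      have h3 : Real.sqrt (∑ j, ‖(hC.eigenvectorBasis i) j‖ ^ 2) = 1 := h2.symm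
      have h4 : (∑ j, ‖(hC.eigenvectorBasis i) j‖ ^ 2) = 1 := Real.sqrt_eq_one.mp h3
      simpa [Real.norm_eq_abs, sq_abs] using h4
    set a := v ⬝ᵥ (S *ᵥ v) with ha
    set b := v ⬝ᵥ (T *ᵥ v) with hb
    have ha0 : 0 ≤ a := by simpa using hS.dotProduct_mulVec_nonneg v
    have hb0 : 0 ≤ b := by simpa using hT.dotProduct_mulVec_nonneg v
    have hlab : lam = a - b := by
      have : v ⬝ᵥ (C *ᵥ v) = lam := by
        rw [hev, dotProduct_smul, smul_eq_mul]
        have : v ⬝ᵥ v = 1 := by simpa [dotProduct, sq] using hnorm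
        rw [this, mul_one]
      rw [← this, hCdef, Matrix.sub_mulVec, dotProduct_sub, ha, hb]
    -- quadratic form of A - B at v
    have hCsymm : Cᵀ = C := by
      have := hC; rwa [Matrix.IsHermitian, Matrix.conjTranspose_eq_transpose_of_trivial] at this
    have hqAB : v ⬝ᵥ ((A - B) *ᵥ v) = lam * (a + b) := by
      rw [hdecomp, Matrix.add_mulVec, dotProduct_add, ← Matrix.mulVec_mulVec,
        ← Matrix.mulVec_mulVec, hev, Matrix.mulVec_smul, dotProduct_smul]
      have hCT : v ⬝ᵥ (C *ᵥ (T *ᵥ v)) = lam * b := by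
        rw [Matrix.dotProduct_mulVec, ← Matrix.mulVec_transpose, hCsymm, hev]
        simp [smul_dotProduct, hb, smul_eq_mul]
      rw [hCT]
      simp [smul_eq_mul, ha]
      ring
    have hbound := aux_quad_le (A - B) v hnorm
    rw [hqAB] at hbound
    have habs : |lam| ≤ a + b := by
      rw [hlab]; rw [abs_le]; constructor <;> linarith
    have : lam ^ 2 ≤ |lam * (a + b)| := by
      rw [abs_mul, abs_of_nonneg (by linarith : (0:ℝ) ≤ a + b)]
      calc lam ^ 2 = |lam| * |lam| := by rw [abs_mul_abs_self, sq]
        _ ≤ |lam| * (a + b) := by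
            apply mul_le_mul_of_nonneg_left habs (abs_nonneg _)
    exact this.trans hbound
  -- Frobenius norm squared = sum of squared eigenvalues
  have htrace : ∑ i, ∑ j, (C i j) ^ 2 = ∑ i, (hC.eigenvalues i) ^ 2 := by
    have h1 : ∑ i, ∑ j, (C i j) ^ 2 = (C * C).trace := by
      rw [Matrix.trace]
      simp only [Matrix.diag, Matrix.mul_apply]
      rw [Finset.sum_comm]
      congr 1; ext i; congr 1; ext j
      have : C j i = C i j := by
        conv_lhs => rw [← hC]
        simp [Matrix.conjTranspose_apply]
      rw [this, sq]
    rw [h1]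
    set U : Matrix (Fin d) (Fin d) ℝ := (hC.eigenvectorUnitary : Matrix (Fin d) (Fin d) ℝ) with hU
    set D : Matrix (Fin d) (Fin d) ℝ := Matrix.diagonal (RCLike.ofReal ∘ hC.eigenvalues) with hD
    have hspec : C = U * D * star U := hC.spectral_theorem
    have hUU : star U * U = 1 := by
      have := hC.eigenvectorUnitary.2
      exact (Matrix.mem_unitaryGroup_iff'.mp this)
    have : C * C = U * (D * D) * star U := by
      rw [hspec]
      calc (U * D * star U) * (U * D * star U)
          = U * D * (star U * U) * D * star U := by noncomm_ring
        _ = U * (D * D) * star U := by rw [hUU]; noncomm_ring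
    rw [this, Matrix.trace_mul_comm, ← Matrix.mul_assoc, hUU, Matrix.one_mul, hD,
      Matrix.diagonal_mul_diagonal, Matrix.trace_diagonal]
    simp [sq]
  -- combine
  have hsum : ∑ i, ∑ j, (C i j) ^ 2 ≤ d * F := by
    rw [htrace]
    calc ∑ i, (hC.eigenvalues i) ^ 2 ≤ ∑ _i : Fin d, F := Finset.sum_le_sum fun i _ => key i
      _ = d * F := by simp [mul_comm]
  have h2 : frobNorm C ≤ Real.sqrt (d * F) := Real.sqrt_le_sqrt hsum
  refine h2.trans ?_
  rw [Real.sqrt_mul (by positivity) F]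
  have hds : Real.sqrt d ≤ (d : ℝ) ^ ((3:ℝ)/4) := by
    rw [Real.sqrt_eq_rpow]
    apply Real.rpow_le_rpow_of_exponent_le
    · exact_mod_cast hd
    · norm_num
  exact mul_le_mul_of_nonneg_right hds (Real.sqrt_nonneg F)
end

section
/- Let X₁, …, X_n be i.i.d. real random variables with mean 0 and E X₁² = σ², satisfying |X₁| ≤ C almost surely and E X₁² ≤ a², E|X₁|³ ≤ a³ for constants 0 < a ≤ C. Let f_n be the characteristic function of (X₁ + ⋯ + X_n)/√n. Then for all u with |u| ≤ 0.4√n / C, one has |f_n(u) − exp(−σ²u²/2)| ≤ 0.25 |u|³ a³ / √n. -/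
open MeasureTheory ProbabilityTheory

open intervalIntegral

section AuxCLT

lemma norm_le_integral_of_deriv {F F' : ℝ → ℂ} {g : ℝ → ℝ} (x : ℝ)
    (hF : ∀ t, HasDerivAt F (F' t) t) (hF' : Continuous F')
    (hg : Continuous g) (hbound : ∀ t ∈ Set.Icc 0 x, ‖F' t‖ ≤ g t)
    (hF0 : F 0 = 0) (hx : 0 ≤ x) :
    ‖F x‖ ≤ ∫ t in (0:ℝ)..x, g t := by
  have h1 : F x = ∫ t in (0:ℝ)..x, F' t := by
    rw [integral_eq_sub_of_hasDerivAt (fun t _ => hF t)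
      (hF'.intervalIntegrable 0 x), hF0, sub_zero]
  rw [h1]
  calc ‖∫ t in (0:ℝ)..x, F' t‖ ≤ ∫ t in (0:ℝ)..x, ‖F' t‖ :=
        norm_integral_le_integral_norm hx
    _ ≤ ∫ t in (0:ℝ)..x, g t :=
        integral_mono_on hx ((hF'.norm).intervalIntegrable 0 x)
          (hg.intervalIntegrable 0 x) (fun t ht => hbound t ht)

lemma hasDerivAt_cexp_mul_I (t : ℝ) :
    HasDerivAt (fun s : ℝ => Complex.exp (s * Complex.I))
      (Complex.I * Complex.exp (t * Complex.I)) t := by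
  have h1 : HasDerivAt (fun z : ℂ => Complex.exp (z * Complex.I))
      (Complex.exp ((t:ℂ) * Complex.I) * Complex.I) (t:ℝ) := by
    exact ((Complex.hasDerivAt_exp ((t:ℂ) * Complex.I)).comp (t:ℂ)
      (hasDerivAt_mul_const Complex.I))
  simpa [mul_comm] using h1.comp_ofReal

lemma hasDerivAt_ofReal_mul_I (t : ℝ) :
    HasDerivAt (fun s : ℝ => (s : ℂ) * Complex.I) Complex.I t := by
  simpa using (Complex.ofRealCLM.hasDerivAt (x := t)).mul_const Complex.I

lemma taylor1_nonneg {x : ℝ} (hx : 0 ≤ x) :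
    ‖Complex.exp (x * Complex.I) - 1‖ ≤ x := by
  have hd : ∀ t : ℝ, HasDerivAt (fun s : ℝ => Complex.exp (s * Complex.I) - 1)
      (Complex.I * Complex.exp (t * Complex.I)) t :=
    fun t => (hasDerivAt_cexp_mul_I t).sub_const 1
  have := norm_le_integral_of_deriv (g := fun _ => (1:ℝ)) x hd (by continuity) continuous_const
    (fun t _ => by simp [Complex.norm_exp]) (by simp) hx
  simpa using this

lemma conj_exp_I (x : ℝ) :
    (starRingEnd ℂ) (Complex.exp (x * Complex.I)) = Complex.exp ((-x : ℝ) * Complex.I) := by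
  rw [← Complex.exp_conj, map_mul, Complex.conj_ofReal, Complex.conj_I]
  push_cast
  ring_nf

lemma taylor1 (x : ℝ) : ‖Complex.exp (x * Complex.I) - 1‖ ≤ |x| := by
  rcases le_or_gt 0 x with hx | hx
  · rw [abs_of_nonneg hx]; exact taylor1_nonneg hx
  · have h : ‖Complex.exp ((-x : ℝ) * Complex.I) - 1‖ ≤ -x := taylor1_nonneg (by linarith)
    rw [abs_of_neg hx]
    calc ‖Complex.exp (x * Complex.I) - 1‖
        = ‖(starRingEnd ℂ) (Complex.exp (x * Complex.I) - 1)‖ := (RCLike.norm_conj _).symm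
      _ = ‖Complex.exp ((-x : ℝ) * Complex.I) - 1‖ := by rw [map_sub, conj_exp_I, map_one]
      _ ≤ -x := h

lemma taylor2_nonneg {x : ℝ} (hx : 0 ≤ x) :
    ‖Complex.exp (x * Complex.I) - 1 - x * Complex.I‖ ≤ x ^ 2 / 2 := by
  have hd : ∀ t : ℝ, HasDerivAt
      (fun s : ℝ => Complex.exp (s * Complex.I) - 1 - s * Complex.I)
      (Complex.I * Complex.exp (t * Complex.I) - Complex.I) t :=
    fun t => ((hasDerivAt_cexp_mul_I t).sub_const 1).sub (hasDerivAt_ofReal_mul_I t)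
  have hb : ∀ t ∈ Set.Icc (0:ℝ) x,
      ‖Complex.I * Complex.exp (t * Complex.I) - Complex.I‖ ≤ t := by
    intro t ht
    have : Complex.I * Complex.exp (t * Complex.I) - Complex.I
        = Complex.I * (Complex.exp (t * Complex.I) - 1) := by ring
    rw [this, norm_mul, Complex.norm_I, one_mul]
    calc ‖Complex.exp (t * Complex.I) - 1‖ ≤ |t| := taylor1 t
      _ = t := abs_of_nonneg ht.1
  have := norm_le_integral_of_deriv (g := fun t => t) x hd (by continuity) continuous_id
    hb (by simp) hx
  calc ‖Complex.exp (x * Complex.I) - 1 - x * Complex.I‖ ≤ ∫ t in (0:ℝ)..x, t := this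
    _ = x ^ 2 / 2 := by rw [integral_id]; ring

lemma taylor2 (x : ℝ) : ‖Complex.exp (x * Complex.I) - 1 - x * Complex.I‖ ≤ x ^ 2 / 2 := by
  rcases le_or_gt 0 x with hx | hx
  · exact taylor2_nonneg hx
  · have h := taylor2_nonneg (x := -x) (by linarith)
    have hc : (starRingEnd ℂ) (Complex.exp (x * Complex.I) - 1 - x * Complex.I)
        = Complex.exp ((-x : ℝ) * Complex.I) - 1 - ((-x : ℝ) : ℂ) * Complex.I := by
      rw [map_sub, map_sub, conj_exp_I, map_one, map_mul, Complex.conj_ofReal, Complex.conj_I]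
      push_cast
      ring
    calc ‖Complex.exp (x * Complex.I) - 1 - x * Complex.I‖
        = ‖(starRingEnd ℂ) (Complex.exp (x * Complex.I) - 1 - x * Complex.I)‖ :=
          (RCLike.norm_conj _).symm
      _ = ‖Complex.exp ((-x : ℝ) * Complex.I) - 1 - ((-x : ℝ) : ℂ) * Complex.I‖ := by rw [hc]
      _ ≤ (-x) ^ 2 / 2 := by push_cast at h ⊢; exact h
      _ = x ^ 2 / 2 := by ring

lemma taylor3 (x : ℝ) :
    ‖Complex.exp (x * Complex.I) - 1 - x * Complex.I + (x:ℂ) ^ 2 / 2‖ ≤ |x| ^ 3 / 6 := by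
  have key : ∀ y : ℝ, 0 ≤ y →
      ‖Complex.exp (y * Complex.I) - 1 - y * Complex.I + (y:ℂ) ^ 2 / 2‖ ≤ y ^ 3 / 6 := by
    intro y hy
    have h0 : ∀ t : ℝ, HasDerivAt (fun s : ℝ => (s : ℂ)) 1 t := by
      intro t; exact Complex.ofRealCLM.hasDerivAt (x := t)
    have hd : ∀ t : ℝ, HasDerivAt
        (fun s : ℝ => Complex.exp (s * Complex.I) - 1 - s * Complex.I + (s:ℂ) ^ 2 / 2)
        (Complex.I * (Complex.exp (t * Complex.I) - 1 - t * Complex.I)) t := by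
      intro t
      have h3 : HasDerivAt (fun s : ℝ => (s:ℂ) ^ 2 / 2) ((t:ℂ)) t := by
        have := (((h0 t).mul (h0 t))).div_const 2
        have h4 : (1 * (t:ℂ) + (t:ℂ) * 1) / 2 = (t:ℂ) := by ring
        have h5 : (fun s : ℝ => (s:ℂ) ^ 2 / 2)
            = fun x => ((fun s : ℝ => (s:ℂ)) * fun s : ℝ => (s:ℂ)) x / 2 := by
          funext s; simp [sq]
        rw [h5, ← h4]
        exact this
      have := (((hasDerivAt_cexp_mul_I t).sub_const 1).sub (hasDerivAt_ofReal_mul_I t)).add h3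
      refine this.congr_deriv ?_
      have hI : Complex.I * Complex.I = -1 := Complex.I_mul_I
      ring_nf
      rw [Complex.I_sq]
      ring
    have hb : ∀ t ∈ Set.Icc (0:ℝ) y,
        ‖Complex.I * (Complex.exp (t * Complex.I) - 1 - t * Complex.I)‖ ≤ t ^ 2 / 2 := by
      intro t ht
      rw [norm_mul, Complex.norm_I, one_mul]
      exact taylor2 t
    have := norm_le_integral_of_deriv (g := fun t => t ^ 2 / 2) y hd
      (by continuity) (by continuity) hb (by simp) hy
    calc ‖Complex.exp (y * Complex.I) - 1 - y * Complex.I + (y:ℂ) ^ 2 / 2‖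
        ≤ ∫ t in (0:ℝ)..y, t ^ 2 / 2 := this
      _ = y ^ 3 / 6 := by
          rw [intervalIntegral.integral_div, integral_pow]; ring
  rcases le_or_gt 0 x with hx | hx
  · rw [abs_of_nonneg hx]; exact key x hx
  · rw [abs_of_neg hx]
    have h := key (-x) (by linarith)
    have hc : (starRingEnd ℂ) (Complex.exp (x * Complex.I) - 1 - x * Complex.I + (x:ℂ) ^ 2 / 2)
        = Complex.exp ((-x : ℝ) * Complex.I) - 1 - ((-x : ℝ) : ℂ) * Complex.I
          + (((-x : ℝ) : ℂ)) ^ 2 / 2 := by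
      rw [map_add, map_sub, map_sub, conj_exp_I, map_one, map_mul, Complex.conj_ofReal,
        Complex.conj_I, map_div₀, map_pow, Complex.conj_ofReal, Complex.conj_ofNat]
      push_cast
      ring
    calc ‖Complex.exp (x * Complex.I) - 1 - x * Complex.I + (x:ℂ) ^ 2 / 2‖
        = ‖(starRingEnd ℂ) (Complex.exp (x * Complex.I) - 1 - x * Complex.I + (x:ℂ) ^ 2 / 2)‖ :=
          (RCLike.norm_conj _).symm
      _ = ‖Complex.exp ((-x : ℝ) * Complex.I) - 1 - ((-x : ℝ) : ℂ) * Complex.I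
          + (((-x : ℝ) : ℂ)) ^ 2 / 2‖ := by rw [hc]
      _ ≤ (-x) ^ 3 / 6 := by push_cast at h ⊢; exact h

open ProbabilityTheory

lemma real_exp_taylor_bound {x : ℝ} (hx : 0 ≤ x) :
    |Real.exp (-x) - (1 - x)| ≤ x ^ 2 / 2 := by
  rw [abs_le]
  constructor
  · have := Real.add_one_le_exp (-x)
    nlinarith [sq_nonneg x]
  · -- exp(-x) - 1 + x ≤ x^2/2 via FTC
    have h1 : Real.exp (-x) - 1 + x = ∫ t in (0:ℝ)..x, (1 - Real.exp (-t)) := by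
      have : ∀ t ∈ Set.uIcc (0:ℝ) x, HasDerivAt (fun s : ℝ => Real.exp (-s) - 1 + s)
          (1 - Real.exp (-t)) t := by
        intro t _
        have h : HasDerivAt (fun s : ℝ => Real.exp (-s) - 1)
            (Real.exp (-t) * (-1)) t :=
          ((Real.hasDerivAt_exp (-t)).comp t ((hasDerivAt_id t).neg)).sub_const 1
        have h2 : HasDerivAt (fun s : ℝ => Real.exp (-s) - 1 + s)
            (Real.exp (-t) * (-1) + 1) t := h.add (hasDerivAt_id t)
        convert h2 using 1
        ring
      rw [intervalIntegral.integral_eq_sub_of_hasDerivAt (fun t ht => this t ht)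
        ((by continuity : Continuous fun t : ℝ => 1 - Real.exp (-t)).intervalIntegrable 0 x)]
      simp
    have h2 : (∫ t in (0:ℝ)..x, (1 - Real.exp (-t))) ≤ ∫ t in (0:ℝ)..x, t := by
      apply intervalIntegral.integral_mono_on hx
        ((by continuity : Continuous fun t : ℝ => 1 - Real.exp (-t)).intervalIntegrable 0 x)
        (continuous_id.intervalIntegrable 0 x)
      intro t ht
      simp only [id_eq]
      have := Real.add_one_le_exp (-t)
      linarith
    rw [integral_id] at h2
    linarith

lemma norm_pow_sub_pow_le_of_norm_le_one (z w : ℂ) (hz : ‖z‖ ≤ 1) (hw : ‖w‖ ≤ 1) (n : ℕ) :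
    ‖z ^ n - w ^ n‖ ≤ n * ‖z - w‖ := by
  induction n with
  | zero => simp
  | succ n ih =>
    have key : z ^ (n + 1) - w ^ (n + 1) = z ^ n * (z - w) + (z ^ n - w ^ n) * w := by ring
    calc ‖z ^ (n + 1) - w ^ (n + 1)‖
        ≤ ‖z ^ n * (z - w)‖ + ‖(z ^ n - w ^ n) * w‖ := by rw [key]; exact norm_add_le _ _
      _ = ‖z‖ ^ n * ‖z - w‖ + ‖z ^ n - w ^ n‖ * ‖w‖ := by rw [norm_mul, norm_mul, norm_pow]
      _ ≤ 1 ^ n * ‖z - w‖ + (n * ‖z - w‖) * 1 := by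
          gcongr
      _ = (n + 1 : ℕ) * ‖z - w‖ := by push_cast; ring

lemma IndepFun.integral_mul_complex {Ω : Type*} [MeasurableSpace Ω] {P : Measure Ω}
    [IsProbabilityMeasure P] {f g : Ω → ℂ}
    (h : IndepFun f g P) (hf : Integrable f P) (hg : Integrable g P) :
    ∫ ω, f ω * g ω ∂P = (∫ ω, f ω ∂P) * (∫ ω, g ω ∂P) := by
  have hrr : IndepFun (fun ω => (f ω).re) (fun ω => (g ω).re) P :=
    h.comp Complex.measurable_re Complex.measurable_re
  have hri : IndepFun (fun ω => (f ω).re) (fun ω => (g ω).im) P :=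
    h.comp Complex.measurable_re Complex.measurable_im
  have hir : IndepFun (fun ω => (f ω).im) (fun ω => (g ω).re) P :=
    h.comp Complex.measurable_im Complex.measurable_re
  have hii : IndepFun (fun ω => (f ω).im) (fun ω => (g ω).im) P :=
    h.comp Complex.measurable_im Complex.measurable_im
  have hfr : Integrable (fun ω => (f ω).re) P := hf.re
  have hfi : Integrable (fun ω => (f ω).im) P := hf.im
  have hgr : Integrable (fun ω => (g ω).re) P := hg.re
  have hgi : Integrable (fun ω => (g ω).im) P := hg.im
  have hfg : Integrable (fun ω => f ω * g ω) P := h.integrable_mul hf hg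
  have i1 : Integrable (fun ω => (f ω).re * (g ω).re) P := hrr.integrable_mul hfr hgr
  have i2 : Integrable (fun ω => (f ω).im * (g ω).im) P := hii.integrable_mul hfi hgi
  have i3 : Integrable (fun ω => (f ω).re * (g ω).im) P := hri.integrable_mul hfr hgi
  have i4 : Integrable (fun ω => (f ω).im * (g ω).re) P := hir.integrable_mul hfi hgr
  have Rfg : ∫ ω, (f ω * g ω).re ∂P = (∫ ω, f ω * g ω ∂P).re :=
    Complex.reCLM.integral_comp_comm hfg
  have Ifg : ∫ ω, (f ω * g ω).im ∂P = (∫ ω, f ω * g ω ∂P).im :=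
    Complex.imCLM.integral_comp_comm hfg
  have Rf : ∫ ω, (f ω).re ∂P = (∫ ω, f ω ∂P).re := Complex.reCLM.integral_comp_comm hf
  have If : ∫ ω, (f ω).im ∂P = (∫ ω, f ω ∂P).im := Complex.imCLM.integral_comp_comm hf
  have Rg : ∫ ω, (g ω).re ∂P = (∫ ω, g ω ∂P).re := Complex.reCLM.integral_comp_comm hg
  have Ig : ∫ ω, (g ω).im ∂P = (∫ ω, g ω ∂P).im := Complex.imCLM.integral_comp_comm hg
  apply Complex.ext
  · rw [← Rfg, Complex.mul_re, ← Rf, ← Rg, ← If, ← Ig]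
    have : (fun ω => (f ω * g ω).re)
        = fun ω => (f ω).re * (g ω).re - (f ω).im * (g ω).im := by
      funext ω; exact Complex.mul_re _ _
    rw [this, integral_sub i1 i2, hrr.integral_fun_mul_eq_mul_integral hfr.1 hgr.1, hii.integral_fun_mul_eq_mul_integral hfi.1 hgi.1]
  · rw [← Ifg, Complex.mul_im, ← Rf, ← Rg, ← If, ← Ig]
    have : (fun ω => (f ω * g ω).im)
        = fun ω => (f ω).re * (g ω).im + (f ω).im * (g ω).re := by
      funext ω; exact Complex.mul_im _ _
    rw [this, integral_add i3 i4, hri.integral_fun_mul_eq_mul_integral hfr.1 hgi.1, hir.integral_fun_mul_eq_mul_integral hfi.1 hgr.1]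

lemma measurable_cexp_mul {Ω : Type*} [MeasurableSpace Ω] {V : Ω → ℝ} (hV : Measurable V)
    (t : ℝ) : Measurable (fun ω => Complex.exp (Complex.I * ((t * V ω : ℝ) : ℂ))) :=
  Complex.measurable_exp.comp
    (measurable_const.mul ((Complex.measurable_ofReal.comp (hV.const_mul t))))

lemma integrable_cexp_mul {Ω : Type*} [MeasurableSpace Ω] {P : Measure Ω}
    [IsProbabilityMeasure P] {V : Ω → ℝ} (hV : Measurable V) (t : ℝ) :
    Integrable (fun ω => Complex.exp (Complex.I * ((t * V ω : ℝ) : ℂ))) P := by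
  refine Integrable.mono' (integrable_const 1)
    (measurable_cexp_mul hV t).aestronglyMeasurable ?_
  filter_upwards with ω
  simp [Complex.norm_exp]

lemma norm_integral_cexp_le_one {Ω : Type*} [MeasurableSpace Ω] {P : Measure Ω}
    [IsProbabilityMeasure P] (V : Ω → ℝ) (t : ℝ) :
    ‖∫ ω, Complex.exp (Complex.I * ((t * V ω : ℝ) : ℂ)) ∂P‖ ≤ 1 := by
  calc ‖∫ ω, Complex.exp (Complex.I * ((t * V ω : ℝ) : ℂ)) ∂P‖
      ≤ ∫ ω, ‖Complex.exp (Complex.I * ((t * V ω : ℝ) : ℂ))‖ ∂P :=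
        norm_integral_le_integral_norm _
    _ = ∫ (_ : Ω), (1:ℝ) ∂P := by
        apply MeasureTheory.integral_congr_ae
        filter_upwards with ω
        simp [Complex.norm_exp]
    _ = 1 := by simp

lemma integral_cexp_sum {Ω : Type*} [MeasurableSpace Ω] {P : Measure Ω}
    [IsProbabilityMeasure P] {ι : Type*} {X : ι → Ω → ℝ}
    (hindep : iIndepFun X P) (hmeas : ∀ i, Measurable (X i))
    (t : ℝ) (s : Finset ι) :
    ∫ ω, Complex.exp (Complex.I * ((t * (∑ i ∈ s, X i ω) : ℝ) : ℂ)) ∂P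
      = ∏ i ∈ s, ∫ ω, Complex.exp (Complex.I * ((t * X i ω : ℝ) : ℂ)) ∂P := by
  classical
  induction s using Finset.induction_on with
  | empty => simp
  | @insert i s hi ih =>
    rw [Finset.prod_insert hi, ← ih]
    have hIndep : IndepFun (X i) (∑ j ∈ s, X j) P :=
      (hindep.indepFun_finsetSum_of_notMem hmeas hi).symm
    have hφ : Measurable (fun x : ℝ => Complex.exp (Complex.I * ((t * x : ℝ) : ℂ))) :=
      Complex.measurable_exp.comp
        (measurable_const.mul (Complex.measurable_ofReal.comp (measurable_id.const_mul t)))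
    have hSmeas : Measurable (fun ω => ∑ j ∈ s, X j ω) := by
      apply Finset.measurable_sum
      exact fun j _ => hmeas j
    have hIndep2 : IndepFun (fun ω => Complex.exp (Complex.I * ((t * X i ω : ℝ) : ℂ)))
        (fun ω => Complex.exp (Complex.I * ((t * (∑ j ∈ s, X j ω) : ℝ) : ℂ))) P := by
      have h2 := hIndep.comp hφ hφ
      have eg : ((fun x : ℝ => Complex.exp (Complex.I * ((t * x : ℝ) : ℂ))) ∘ (∑ j ∈ s, X j))
          = fun ω => Complex.exp (Complex.I * ((t * (∑ j ∈ s, X j ω) : ℝ) : ℂ)) := by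
        funext ω
        simp [Function.comp, Finset.sum_apply]
      exact eg ▸ h2
    have key : ∫ ω, Complex.exp (Complex.I * ((t * (∑ j ∈ insert i s, X j ω) : ℝ) : ℂ)) ∂P
        = ∫ ω, Complex.exp (Complex.I * ((t * X i ω : ℝ) : ℂ))
            * Complex.exp (Complex.I * ((t * (∑ j ∈ s, X j ω) : ℝ) : ℂ)) ∂P := by
      apply MeasureTheory.integral_congr_ae
      filter_upwards with ω
      rw [← Complex.exp_add, Finset.sum_insert hi]
      push_cast
      ring_nf
    rw [key, IndepFun.integral_mul_complex hIndep2 (integrable_cexp_mul (hmeas i) t)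
      (integrable_cexp_mul hSmeas t)]

lemma charFun_taylor {Ω : Type*} [MeasurableSpace Ω] {P : Measure Ω} [IsProbabilityMeasure P]
    {Y : Ω → ℝ} (hY : Measurable Y) {C σ2 m3 : ℝ}
    (hbdd : ∀ᵐ ω ∂P, |Y ω| ≤ C)
    (hmean : ∫ ω, Y ω ∂P = 0) (hvar : ∫ ω, (Y ω) ^ 2 ∂P = σ2)
    (hm3 : ∫ ω, |Y ω| ^ 3 ∂P = m3) (t : ℝ) :
    ‖(∫ ω, Complex.exp (Complex.I * ((t * Y ω : ℝ) : ℂ)) ∂P)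
        - ((1 : ℂ) - ((σ2 * t ^ 2 / 2 : ℝ) : ℂ))‖ ≤ |t| ^ 3 * m3 / 6 := by
  have IY : Integrable Y P := by
    refine Integrable.mono' (integrable_const C) hY.aestronglyMeasurable ?_
    filter_upwards [hbdd] with ω h using h
  have IY2 : Integrable (fun ω => (Y ω) ^ 2) P := by
    refine Integrable.mono' (integrable_const (C ^ 2)) (hY.pow_const 2).aestronglyMeasurable ?_
    filter_upwards [hbdd] with ω h
    rw [Real.norm_eq_abs, abs_pow]
    exact pow_le_pow_left₀ (abs_nonneg _) h 2
  have IY3 : Integrable (fun ω => |Y ω| ^ 3) P := by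
    refine Integrable.mono' (integrable_const (C ^ 3))
      ((hY.abs.pow_const 3)).aestronglyMeasurable ?_
    filter_upwards [hbdd] with ω h
    rw [Real.norm_eq_abs, abs_pow, abs_abs]
    exact pow_le_pow_left₀ (abs_nonneg _) h 3
  have I1 : Integrable (fun ω => Complex.exp (Complex.I * ((t * Y ω : ℝ) : ℂ))) P :=
    integrable_cexp_mul hY t
  have I2 : Integrable (fun ω => ((t * Y ω : ℝ) : ℂ) * Complex.I) P :=
    ((IY.const_mul t).ofReal).mul_const _
  have I3 : Integrable (fun ω => ((t * Y ω : ℝ) : ℂ) ^ 2 / 2) P := by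
    have heq : (fun ω => ((t * Y ω : ℝ) : ℂ) ^ 2 / 2)
        = fun ω => (((t ^ 2 * (Y ω) ^ 2 / 2 : ℝ)) : ℂ) := by
      funext ω; push_cast; ring
    rw [heq]
    exact ((IY2.const_mul (t ^ 2)).div_const 2).ofReal
  have e1 : ∫ ω, ((t * Y ω : ℝ) : ℂ) * Complex.I ∂P = 0 := by
    have : ∫ ω, ((t * Y ω : ℝ) : ℂ) * Complex.I ∂P
        = (∫ ω, ((t * Y ω : ℝ) : ℂ) ∂P) * Complex.I := by
      simp_rw [← smul_eq_mul]
      exact integral_smul_const _ _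
    have hco : ∫ ω, ((t * Y ω : ℝ) : ℂ) ∂P = ((∫ ω, t * Y ω ∂P : ℝ) : ℂ) :=
      Complex.ofRealCLM.integral_comp_comm (IY.const_mul t)
    rw [this, hco, MeasureTheory.integral_const_mul t Y, hmean]
    simp
  have e2 : ∫ ω, ((t * Y ω : ℝ) : ℂ) ^ 2 / 2 ∂P = ((σ2 * t ^ 2 / 2 : ℝ) : ℂ) := by
    have heq : (fun ω => ((t * Y ω : ℝ) : ℂ) ^ 2 / 2)
        = fun ω => (((t ^ 2 * (Y ω) ^ 2 / 2 : ℝ)) : ℂ) := by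
      funext ω; push_cast; ring
    have hco : ∫ ω, ((t ^ 2 * (Y ω) ^ 2 / 2 : ℝ) : ℂ) ∂P
        = ((∫ ω, t ^ 2 * (Y ω) ^ 2 / 2 ∂P : ℝ) : ℂ) :=
      Complex.ofRealCLM.integral_comp_comm ((IY2.const_mul (t ^ 2)).div_const 2)
    rw [heq, hco]
    norm_cast
    rw [MeasureTheory.integral_div, MeasureTheory.integral_const_mul, hvar]
    ring
  have J1 : Integrable (fun ω => Complex.exp (Complex.I * ((t * Y ω : ℝ) : ℂ)) - 1) P :=
    I1.sub (integrable_const 1)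
  have J2 : Integrable (fun ω => Complex.exp (Complex.I * ((t * Y ω : ℝ) : ℂ)) - 1
      - ((t * Y ω : ℝ) : ℂ) * Complex.I) P := J1.sub I2
  have J3 : Integrable (fun ω => Complex.exp (Complex.I * ((t * Y ω : ℝ) : ℂ)) - 1
      - ((t * Y ω : ℝ) : ℂ) * Complex.I + ((t * Y ω : ℝ) : ℂ) ^ 2 / 2) P := J2.add I3
  have hEq : (∫ ω, (Complex.exp (Complex.I * ((t * Y ω : ℝ) : ℂ)) - 1
        - ((t * Y ω : ℝ) : ℂ) * Complex.I + ((t * Y ω : ℝ) : ℂ) ^ 2 / 2) ∂P)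
      = (∫ ω, Complex.exp (Complex.I * ((t * Y ω : ℝ) : ℂ)) ∂P)
        - ((1 : ℂ) - ((σ2 * t ^ 2 / 2 : ℝ) : ℂ)) := by
    rw [integral_add J2 I3, integral_sub J1 I2, integral_sub I1 (integrable_const 1),
      MeasureTheory.integral_const, e1, e2]
    simp
    ring
  rw [← hEq]
  calc ‖∫ ω, (Complex.exp (Complex.I * ((t * Y ω : ℝ) : ℂ)) - 1
        - ((t * Y ω : ℝ) : ℂ) * Complex.I + ((t * Y ω : ℝ) : ℂ) ^ 2 / 2) ∂P‖
      ≤ ∫ ω, ‖Complex.exp (Complex.I * ((t * Y ω : ℝ) : ℂ)) - 1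
        - ((t * Y ω : ℝ) : ℂ) * Complex.I + ((t * Y ω : ℝ) : ℂ) ^ 2 / 2‖ ∂P :=
        norm_integral_le_integral_norm _
    _ ≤ ∫ ω, |t| ^ 3 * |Y ω| ^ 3 / 6 ∂P := by
        apply integral_mono J3.norm ((IY3.const_mul (|t| ^ 3)).div_const 6)
        intro ω
        simp only [Pi.add_apply, Pi.sub_apply]
        have hcomm : Complex.I * ((t * Y ω : ℝ) : ℂ) = ((t * Y ω : ℝ) : ℂ) * Complex.I :=
          mul_comm _ _
        rw [hcomm]
        calc ‖Complex.exp (((t * Y ω : ℝ) : ℂ) * Complex.I) - 1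
            - ((t * Y ω : ℝ) : ℂ) * Complex.I + ((t * Y ω : ℝ) : ℂ) ^ 2 / 2‖
            ≤ |t * Y ω| ^ 3 / 6 := taylor3 (t * Y ω)
          _ = |t| ^ 3 * |Y ω| ^ 3 / 6 := by rw [abs_mul, mul_pow]
    _ = |t| ^ 3 * m3 / 6 := by
        rw [MeasureTheory.integral_div, MeasureTheory.integral_const_mul, hm3]

end AuxCLT

/-- Let `X₁, …, Xₙ` be i.i.d. real random variables with mean `0` and `E X₁² = σ²`,
with `|X₁| ≤ C` almost surely, `E X₁² ≤ a²`, `E|X₁|³ ≤ a³` for constants `0 < a ≤ C`.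
Then the characteristic function `fₙ` of `(X₁ + ⋯ + Xₙ)/√n` satisfies
`|fₙ(u) − exp(−σ²u²/2)| ≤ 0.25 |u|³ a³ / √n` whenever `|u| ≤ 0.4 √n / C`. -/
theorem charFun_normalized_sum_close_to_gaussian {Ω : Type*} [MeasurableSpace Ω]
    (P : Measure Ω) [IsProbabilityMeasure P]
    (n : ℕ) (hn : 0 < n) (X : Fin n → Ω → ℝ)
    (hmeas : ∀ i, Measurable (X i))
    (hindep : iIndepFun X P)
    (hid : ∀ i j, Measure.map (X i) P = Measure.map (X j) P)
    (σ a C : ℝ) (ha : 0 < a) (haC : a ≤ C)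
    (hmean : ∀ i, ∫ ω, X i ω ∂P = 0)
    (hvar : ∀ i, ∫ ω, (X i ω) ^ 2 ∂P = σ ^ 2)
    (hm2 : ∀ i, ∫ ω, (X i ω) ^ 2 ∂P ≤ a ^ 2)
    (hm3 : ∀ i, ∫ ω, |X i ω| ^ 3 ∂P ≤ a ^ 3)
    (hbdd : ∀ i, ∀ᵐ ω ∂P, |X i ω| ≤ C)
    (u : ℝ) (hu : |u| ≤ 0.4 * Real.sqrt n / C) :
    ‖(∫ ω, Complex.exp (Complex.I * (u * ((∑ i, X i ω) / Real.sqrt n))) ∂P)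
          - (Real.exp (-(σ ^ 2 * u ^ 2) / 2) : ℂ)‖
      ≤ 0.25 * |u| ^ 3 * a ^ 3 / Real.sqrt n := by
  have hC : 0 < C := lt_of_lt_of_le ha haC
  set s : ℝ := Real.sqrt n with hs_def
  have hs : 0 < s := Real.sqrt_pos.2 (by exact_mod_cast hn)
  have hs2 : s ^ 2 = n := Real.sq_sqrt (Nat.cast_nonneg n)
  set t : ℝ := u / s with ht_def
  set i0 : Fin n := ⟨0, hn⟩
  set m3 : ℝ := ∫ ω, |X i0 ω| ^ 3 ∂P with hm3_def
  have hm3' : m3 ≤ a ^ 3 := hm3 i0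
  have hm3nn : 0 ≤ m3 := integral_nonneg (fun ω => by positivity)
  have hσ2nn : 0 ≤ σ ^ 2 := sq_nonneg σ
  have hσ2a : σ ^ 2 ≤ a ^ 2 := (hvar i0) ▸ hm2 i0
  -- step 1 : rewrite the integral in canonical form
  have hfn : (∫ ω, Complex.exp (Complex.I * (u * ((∑ i, X i ω) / s))) ∂P)
      = ∫ ω, Complex.exp (Complex.I * ((t * (∑ i ∈ Finset.univ, X i ω) : ℝ) : ℂ)) ∂P := by
    apply MeasureTheory.integral_congr_ae
    filter_upwards with ω
    congr 1
    push_cast [ht_def]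
    ring
  -- step 2+3 : independence and identical distribution give the power formula
  have hprod : (∫ ω, Complex.exp (Complex.I * ((t * (∑ i ∈ Finset.univ, X i ω) : ℝ) : ℂ)) ∂P)
      = (∫ ω, Complex.exp (Complex.I * ((t * X i0 ω : ℝ) : ℂ)) ∂P) ^ n := by
    rw [integral_cexp_sum hindep hmeas t Finset.univ]
    have hphi : ∀ i : Fin n, (∫ ω, Complex.exp (Complex.I * ((t * X i ω : ℝ) : ℂ)) ∂P)
        = ∫ ω, Complex.exp (Complex.I * ((t * X i0 ω : ℝ) : ℂ)) ∂P := by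
      intro i
      have hφm : AEStronglyMeasurable (fun x : ℝ => Complex.exp (Complex.I * ((t * x : ℝ) : ℂ)))
          (P.map (X i)) :=
        (Complex.measurable_exp.comp
          (measurable_const.mul (Complex.measurable_ofReal.comp
            (measurable_id.const_mul t)))).aestronglyMeasurable
      have h1 := MeasureTheory.integral_map (hmeas i).aemeasurable hφm
      have hφm0 : AEStronglyMeasurable (fun x : ℝ => Complex.exp (Complex.I * ((t * x : ℝ) : ℂ)))
          (P.map (X i0)) :=
        (Complex.measurable_exp.comp
          (measurable_const.mul (Complex.measurable_ofReal.comp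
            (measurable_id.const_mul t)))).aestronglyMeasurable
      have h2 := MeasureTheory.integral_map (hmeas i0).aemeasurable hφm0
      rw [← h1, hid i i0, h2]
    rw [Finset.prod_congr rfl (fun i _ => hphi i), Finset.prod_const, Finset.card_univ,
      Fintype.card_fin]
  -- step 4 : gaussian factorization
  set g : ℝ := Real.exp (-(σ ^ 2 * t ^ 2) / 2) with hg_def
  have hgauss : (Real.exp (-(σ ^ 2 * u ^ 2) / 2) : ℝ) = g ^ n := by
    rw [hg_def, ← Real.exp_nat_mul]
    congr 1
    have hn' : (n : ℝ) = s ^ 2 := hs2.symm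
    rw [ht_def]
    field_simp
    rw [hs2]
  have hg_le_one : g ≤ 1 := by
    apply Real.exp_le_one_iff.2
    have h0 : 0 ≤ σ ^ 2 * t ^ 2 := by positivity
    linarith
  have hg_nn : 0 ≤ g := Real.exp_nonneg _
  -- step 5 : power difference bound
  set φ : ℂ := ∫ ω, Complex.exp (Complex.I * ((t * X i0 ω : ℝ) : ℂ)) ∂P with hφ_def
  have hφ_le : ‖φ‖ ≤ 1 := norm_integral_cexp_le_one (X i0) t
  have hgc_le : ‖(g : ℂ)‖ ≤ 1 := by
    rw [Complex.norm_real, Real.norm_eq_abs, abs_of_nonneg hg_nn]; exact hg_le_one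
  -- step 6 : single-factor bound
  have hsingle : ‖φ - (g : ℂ)‖ ≤ |t| ^ 3 * m3 / 6 + (σ ^ 2 * t ^ 2 / 2) ^ 2 / 2 := by
    have h1 : ‖φ - ((1 : ℂ) - ((σ ^ 2 * t ^ 2 / 2 : ℝ) : ℂ))‖ ≤ |t| ^ 3 * m3 / 6 :=
      charFun_taylor (hmeas i0) (hbdd i0) (hmean i0) (hvar i0) rfl t
    have h2 : ‖((1 : ℂ) - ((σ ^ 2 * t ^ 2 / 2 : ℝ) : ℂ)) - (g : ℂ)‖
        ≤ (σ ^ 2 * t ^ 2 / 2) ^ 2 / 2 := by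
      have : ((1 : ℂ) - ((σ ^ 2 * t ^ 2 / 2 : ℝ) : ℂ)) - (g : ℂ)
          = (((1 - σ ^ 2 * t ^ 2 / 2 - g : ℝ)) : ℂ) := by push_cast; ring
      rw [this, Complex.norm_real, Real.norm_eq_abs]
      have hx : 0 ≤ σ ^ 2 * t ^ 2 / 2 := by positivity
      have := real_exp_taylor_bound hx
      rw [abs_sub_comm]
      have hgg : g = Real.exp (-(σ ^ 2 * t ^ 2 / 2)) := by rw [hg_def]; congr 1; ring
      rw [hgg]
      exact real_exp_taylor_bound hx
    calc ‖φ - (g : ℂ)‖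
        ≤ ‖φ - ((1 : ℂ) - ((σ ^ 2 * t ^ 2 / 2 : ℝ) : ℂ))‖
          + ‖((1 : ℂ) - ((σ ^ 2 * t ^ 2 / 2 : ℝ) : ℂ)) - (g : ℂ)‖ := by
          have : φ - (g : ℂ) = (φ - ((1 : ℂ) - ((σ ^ 2 * t ^ 2 / 2 : ℝ) : ℂ)))
              + (((1 : ℂ) - ((σ ^ 2 * t ^ 2 / 2 : ℝ) : ℂ)) - (g : ℂ)) := by ring
          rw [this]; exact norm_add_le _ _
      _ ≤ |t| ^ 3 * m3 / 6 + (σ ^ 2 * t ^ 2 / 2) ^ 2 / 2 := add_le_add h1 h2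
  -- assemble
  clear_value s t i0 m3 g φ
  rw [hfn, hprod, hgauss]
  push_cast
  calc ‖φ ^ n - (g : ℂ) ^ n‖ ≤ n * ‖φ - (g : ℂ)‖ :=
        norm_pow_sub_pow_le_of_norm_le_one φ (g : ℂ) hφ_le hgc_le n
    _ ≤ n * (|t| ^ 3 * m3 / 6 + (σ ^ 2 * t ^ 2 / 2) ^ 2 / 2) := by
        apply mul_le_mul_of_nonneg_left hsingle (Nat.cast_nonneg n)
    _ ≤ 0.25 * |u| ^ 3 * a ^ 3 / s := by
        have hA : 0 ≤ |u| := abs_nonneg u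
        have ht_abs : |t| = |u| / s := by rw [ht_def, abs_div, abs_of_pos hs]
        have hAC : |u| * C ≤ 0.4 * s := by
          rw [le_div_iff₀ hC] at hu
          linarith
        have haA : a * |u| ≤ 0.4 * s := by
          calc a * |u| ≤ C * |u| := mul_le_mul_of_nonneg_right haC hA
            _ = |u| * C := mul_comm _ _
            _ ≤ 0.4 * s := hAC
        have hn' : (n : ℝ) = s ^ 2 := hs2.symm
        rw [ht_abs, hn']
        have hu4 : |u| ^ 4 = u ^ 4 := by
          rw [← abs_pow]; exact abs_of_nonneg (by positivity)
        have hL : s ^ 2 * ((|u| / s) ^ 3 * m3 / 6 + (σ ^ 2 * t ^ 2 / 2) ^ 2 / 2)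
            = |u| ^ 3 * m3 / (6 * s) + (σ ^ 2) ^ 2 * |u| ^ 4 / (8 * s ^ 2) := by
          rw [ht_def, hu4]
          field_simp
          ring
        rw [hL]
        have hb1 : |u| ^ 3 * m3 / (6 * s) ≤ |u| ^ 3 * a ^ 3 / (6 * s) := by gcongr
        have hb2 : (σ ^ 2) ^ 2 * |u| ^ 4 / (8 * s ^ 2) ≤ 0.05 * |u| ^ 3 * a ^ 3 / s := by
          rw [div_le_div_iff₀ (by positivity) hs]
          have hσ4 : (σ ^ 2) ^ 2 ≤ a ^ 4 := by
            calc (σ ^ 2) ^ 2 ≤ (a ^ 2) ^ 2 := pow_le_pow_left₀ hσ2nn hσ2a 2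
              _ = a ^ 4 := by ring
          have key : (σ ^ 2) ^ 2 * |u| ^ 4 ≤ a ^ 4 * |u| ^ 4 :=
            mul_le_mul_of_nonneg_right hσ4 (by positivity)
          calc (σ ^ 2) ^ 2 * |u| ^ 4 * s ≤ a ^ 4 * |u| ^ 4 * s :=
                mul_le_mul_of_nonneg_right key hs.le
            _ = (a * |u|) * (a ^ 3 * |u| ^ 3 * s) := by ring
            _ ≤ (0.4 * s) * (a ^ 3 * |u| ^ 3 * s) :=
                mul_le_mul_of_nonneg_right haA (by positivity)
            _ = 0.05 * |u| ^ 3 * a ^ 3 * (8 * s ^ 2) := by ring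
        have hQ : 0 ≤ |u| ^ 3 * a ^ 3 / s := by positivity
        calc |u| ^ 3 * m3 / (6 * s) + (σ ^ 2) ^ 2 * |u| ^ 4 / (8 * s ^ 2)
            ≤ |u| ^ 3 * a ^ 3 / (6 * s) + 0.05 * |u| ^ 3 * a ^ 3 / s := add_le_add hb1 hb2
          _ = (1/6 + 0.05) * (|u| ^ 3 * a ^ 3 / s) := by ring
          _ ≤ 0.25 * (|u| ^ 3 * a ^ 3 / s) :=
              mul_le_mul_of_nonneg_right (by norm_num) hQ
          _ = 0.25 * |u| ^ 3 * a ^ 3 / s := by ring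
end
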